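/- arXiv:2003.11062 — 4 statements merged into one kernel-verified Lean document; each statement's English description precedes it below -/
import Mathlib

section
/- Let (Ω, F, P) be a probability space, G a sub-σ-algebra of F, R : Ω → ℕ a G-measurable random variable, V : Ω → ℝ a nonnegative integrable random variable, and α ∈ (0,1). If the conditional expectation satisfies E[V | G] ≤ α·R almost surely, then E[ V / max{R, 1} ] ≤ α. -/
open MeasureTheory

/-- If `E[V | G] ≤ α · R` a.s., where `R` is a `G`-measurable `ℕ`-valued random
variable and `V` is a nonnegative integrable random variable, then
`E[ V / max{R, 1} ] ≤ α`. -/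
theorem fdr_core_bound {Ω : Type*} {F : MeasurableSpace Ω} {μ : Measure Ω}
    [IsProbabilityMeasure μ]
    {G : MeasurableSpace Ω} (hG : G ≤ F)
    {R : Ω → ℕ} (hR : Measurable[G] R)
    {V : Ω → ℝ} (hV0 : ∀ ω, 0 ≤ V ω) (hVint : Integrable V μ)
    {α : ℝ} (hα : α ∈ Set.Ioo (0 : ℝ) 1)
    (hcond : ∀ᵐ ω ∂μ, (μ[V | G]) ω ≤ α * (R ω : ℝ)) :
    ∫ ω, V ω / max (R ω : ℝ) 1 ∂μ ≤ α := by
  set c : Ω → ℝ := fun ω => (max (R ω : ℝ) 1)⁻¹ with hc_def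
  have hc_meas : Measurable[G] c := (measurable_from_top : Measurable fun n : ℕ => ((n : ℝ) ⊔ 1)⁻¹).comp hR
  have hc_nonneg : ∀ ω, 0 ≤ c ω := fun ω =>
    inv_nonneg.2 (le_trans zero_le_one (le_max_right _ _))
  have hc_le : ∀ ω, c ω ≤ 1 := fun ω => inv_le_one_of_one_le₀ (le_max_right _ _)
  have hcV : Integrable (c * V) μ := by
    refine Integrable.bdd_mul hVint ((hc_meas.mono hG le_rfl).aestronglyMeasurable)
      (c := 1) (ae_of_all _ fun ω => ?_)
    rw [Real.norm_eq_abs, abs_of_nonneg (hc_nonneg ω)]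
    exact hc_le ω
  have key : μ[c * V | G] =ᵐ[μ] c * μ[V | G] :=
    condExp_mul_of_stronglyMeasurable_left hc_meas.stronglyMeasurable hcV hVint
  have heq : ∫ ω, V ω / max (R ω : ℝ) 1 ∂μ = ∫ ω, (c * V) ω ∂μ := by
    refine integral_congr_ae (ae_of_all _ fun ω => ?_)
    simp [hc_def, div_eq_mul_inv, mul_comm]
  rw [heq, ← integral_condExp hG, integral_congr_ae key]
  have hE0 : 0 ≤ᵐ[μ] μ[V | G] := condExp_nonneg (ae_of_all _ hV0)
  have hbound : ∀ᵐ ω ∂μ, (c * μ[V | G]) ω ≤ α := by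
    filter_upwards [hcond, hE0] with ω h1 h2
    have hRc : (R ω : ℝ) * c ω ≤ 1 := by
      rw [hc_def, ← div_eq_mul_inv]
      exact div_le_one_of_le₀ (le_max_left _ _)
        (le_trans zero_le_one (le_max_right _ _))
    calc c ω * (μ[V | G]) ω ≤ c ω * (α * (R ω : ℝ)) :=
          mul_le_mul_of_nonneg_left h1 (hc_nonneg ω)
      _ = α * ((R ω : ℝ) * c ω) := by ring
      _ ≤ α * 1 := mul_le_mul_of_nonneg_left hRc hα.1.le
      _ = α := mul_one α
  have hint2 : Integrable (c * μ[V | G]) μ := by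
    refine Integrable.bdd_mul integrable_condExp
      ((hc_meas.mono hG le_rfl).aestronglyMeasurable) (c := 1) (ae_of_all _ fun ω => ?_)
    rw [Real.norm_eq_abs, abs_of_nonneg (hc_nonneg ω)]
    exact hc_le ω
  calc ∫ ω, (c * μ[V | G]) ω ∂μ ≤ ∫ _, α ∂μ :=
        integral_mono_ae hint2 (integrable_const α) hbound
    _ = α := by simp
end

section
/- Let (Ω, F, P) be a probability space, G a sub-σ-algebra of F, α ∈ (0,1), and K ≥ 1 an integer. For each k ∈ {1,…,K}, let D_k ∈ G be an event (the event that a change is declared for stream k) and F_k ∈ F an event with F_k ⊆ D_k (the event that the declaration for stream k is a false discovery), and suppose E[1_{F_k} | G] ≤ α·1_{D_k} almost surely. Then E[ (Σ_{k=1}^{K} 1_{F_k}) / max{Σ_{k=1}^{K} 1_{D_k}, 1} ] ≤ α; that is, FDR ≤ α. -/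
open MeasureTheory

lemma indicator_one_integrable {Ω : Type*} {m : MeasurableSpace Ω} {μ : Measure Ω}
    [IsFiniteMeasure μ] {s : Set Ω} (hs : MeasurableSet s) :
    Integrable (s.indicator (fun _ => (1 : ℝ))) μ :=
  (integrable_const (1 : ℝ)).indicator hs

/-- abstract FDR control for the IS-MAP procedure. If for each stream `k` the
declaration event `D k` is `G`-measurable, the false-discovery event `Fk k ⊆ D k`, and
`E[1_{Fk k} | G] ≤ α · 1_{D k}` a.s., then
`E[ (Σ_k 1_{Fk k}) / max{Σ_k 1_{D k}, 1} ] ≤ α`. -/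
theorem fdr_control_IS_MAP {Ω : Type*} {F : MeasurableSpace Ω} {μ : Measure Ω}
    [IsProbabilityMeasure μ]
    {G : MeasurableSpace Ω} (hG : G ≤ F)
    {K : ℕ} (hK : 1 ≤ K)
    {D : Fin K → Set Ω} {Fk : Fin K → Set Ω}
    (hD : ∀ k, MeasurableSet[G] (D k))
    (hF : ∀ k, MeasurableSet[F] (Fk k))
    (hsub : ∀ k, Fk k ⊆ D k)
    {α : ℝ} (hα : α ∈ Set.Ioo (0 : ℝ) 1)
    (hcond : ∀ k, ∀ᵐ ω ∂μ,
      (μ[(Fk k).indicator (fun _ => (1 : ℝ)) | G]) ω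
        ≤ α * (D k).indicator (fun _ => (1 : ℝ)) ω) :
    ∫ ω, (∑ k, (Fk k).indicator (fun _ => (1 : ℝ)) ω)
        / max (∑ k, (D k).indicator (fun _ => (1 : ℝ)) ω) 1 ∂μ ≤ α := by
  obtain ⟨hα0, hα1⟩ := hα
  set S : Ω → ℝ := fun ω => ∑ k, (D k).indicator (fun _ => (1 : ℝ)) ω with hSdef
  set g : Ω → ℝ := fun ω => (max (S ω) 1)⁻¹ with hgdef
  set indF : Fin K → Ω → ℝ := fun k => (Fk k).indicator (fun _ => (1 : ℝ)) with hindF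
  set indD : Fin K → Ω → ℝ := fun k => (D k).indicator (fun _ => (1 : ℝ)) with hindD
  -- measurability of S and g wrt G
  have hSmeasG : Measurable[G] S := by
    apply Finset.measurable_sum
    intro k _
    exact (measurable_const (a := (1:ℝ))).indicator (hD k)
  have hgmeasG : Measurable[G] g := (hSmeasG.max measurable_const).inv
  have hgsmG : StronglyMeasurable[G] g := hgmeasG.stronglyMeasurable
  have hgmeas : Measurable[F] g := hgmeasG.mono hG le_rfl
  -- pointwise bounds
  have hg_nonneg : ∀ ω, 0 ≤ g ω := fun ω =>
    inv_nonneg.mpr (le_trans zero_le_one (le_max_right _ _))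
  have hg_le_one : ∀ ω, g ω ≤ 1 := fun ω => by
    rw [hgdef]
    exact inv_le_one_of_one_le₀ (le_max_right _ _)
  have hg_bound : ∀ ω, ‖g ω‖ ≤ 1 := fun ω => by
    rw [Real.norm_eq_abs, abs_of_nonneg (hg_nonneg ω)]; exact hg_le_one ω
  have hgS_le_one : ∀ ω, g ω * S ω ≤ 1 := by
    intro ω
    have hSpos : (0:ℝ) < max (S ω) 1 := lt_of_lt_of_le zero_lt_one (le_max_right _ _)
    rw [hgdef]
    rw [inv_mul_le_iff₀ hSpos, mul_one]
    exact le_max_left _ _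
  -- integrability
  have hIndF : ∀ k, Integrable (indF k) μ := fun k => indicator_one_integrable (hF k)
  have hIndD : ∀ k, Integrable (indD k) μ := fun k => indicator_one_integrable (hG _ (hD k))
  have hgF : ∀ k, Integrable (fun ω => g ω * indF k ω) μ := fun k =>
    (hIndF k).bdd_mul hgmeas.aestronglyMeasurable (Filter.Eventually.of_forall hg_bound)
  have hgD : ∀ k, Integrable (fun ω => g ω * indD k ω) μ := fun k =>
    (hIndD k).bdd_mul hgmeas.aestronglyMeasurable (Filter.Eventually.of_forall hg_bound)
  -- key per-stream inequality
  have key : ∀ k, ∫ ω, g ω * indF k ω ∂μ ≤ α * ∫ ω, g ω * indD k ω ∂μ := by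
    intro k
    have hmul : μ[(fun ω => g ω * indF k ω)|G] =ᵐ[μ] fun ω => g ω * (μ[indF k|G]) ω :=
      condExp_mul_of_stronglyMeasurable_left hgsmG (hgF k) (hIndF k)
    have h1 : ∫ ω, g ω * indF k ω ∂μ = ∫ ω, (μ[(fun ω => g ω * indF k ω)|G]) ω ∂μ :=
      (integral_condExp hG).symm
    rw [h1, integral_congr_ae hmul]
    have hle : ∀ᵐ ω ∂μ, g ω * (μ[indF k|G]) ω ≤ α * (g ω * indD k ω) := by
      filter_upwards [hcond k] with ω hω
      calc g ω * (μ[indF k|G]) ω ≤ g ω * (α * indD k ω) :=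
            mul_le_mul_of_nonneg_left hω (hg_nonneg ω)
        _ = α * (g ω * indD k ω) := by ring
    have hint1 : Integrable (fun ω => g ω * (μ[indF k|G]) ω) μ :=
      integrable_condExp.bdd_mul hgmeas.aestronglyMeasurable (Filter.Eventually.of_forall hg_bound)
    calc ∫ ω, g ω * (μ[indF k|G]) ω ∂μ ≤ ∫ ω, α * (g ω * indD k ω) ∂μ :=
          integral_mono_ae hint1 ((hgD k).const_mul α) hle
      _ = α * ∫ ω, g ω * indD k ω ∂μ := integral_const_mul α _
  -- rewrite the objective as a sum
  have hrw : ∀ ω, (∑ k, indF k ω) / max (S ω) 1 = ∑ k, g ω * indF k ω := by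
    intro ω
    rw [div_eq_mul_inv, Finset.sum_mul]
    exact Finset.sum_congr rfl (fun k _ => mul_comm _ _)
  calc ∫ ω, (∑ k, indF k ω) / max (S ω) 1 ∂μ
      = ∫ ω, ∑ k, g ω * indF k ω ∂μ := by
        apply integral_congr_ae
        exact Filter.Eventually.of_forall hrw
    _ = ∑ k, ∫ ω, g ω * indF k ω ∂μ := integral_finset_sum _ (fun k _ => hgF k)
    _ ≤ ∑ k, α * ∫ ω, g ω * indD k ω ∂μ := Finset.sum_le_sum (fun k _ => key k)
    _ = α * ∫ ω, g ω * S ω ∂μ := by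
        rw [← Finset.mul_sum, ← integral_finset_sum _ (fun k _ => hgD k)]
        congr 1
        apply integral_congr_ae
        apply Filter.Eventually.of_forall
        intro ω
        simp [hSdef, hindD, Finset.mul_sum]
    _ ≤ α * 1 := by
        apply mul_le_mul_of_nonneg_left _ hα0.le
        calc ∫ ω, g ω * S ω ∂μ ≤ ∫ _ω, (1:ℝ) ∂μ := by
              apply integral_mono_ae _ (integrable_const 1)
                (Filter.Eventually.of_forall hgS_le_one)
              exact (integrable_finset_sum Finset.univ (fun k _ => hIndD k)).bdd_mul
                hgmeas.aestronglyMeasurable (Filter.Eventually.of_forall hg_bound)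
          _ = 1 := by simp
    _ = α := mul_one α
end

section
/- Let (Ω, F, P) be a probability space with a filtration (F_n)_{n ∈ ℕ}, let t : Ω → ℕ be a measurable random time with t ≥ 1, and for each n ∈ ℕ let π_n be an F_n-measurable version of the conditional expectation E[1_{t ≤ n} | F_n]. Fix α ∈ (0,1), an integer K ≥ 1, and an integer r with 1 ≤ r ≤ K, and define the hitting time T_r := inf{ n ∈ ℕ : π_n ≥ 1 − rα/K } (with T_r = ∞ if no such n exists). Then P({T_r < ∞} ∩ {T_r < t}) ≤ rα/K. -/
open MeasureTheory

/-- Type I error guarantee of the S-MAP thresholds. For the hitting time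
`T_r = inf{ n : π_n ≥ 1 - rα/K }` of the posterior probability `π_n = P(t ≤ n | F_n)`,
one has `P(T_r < ∞, T_r < t) ≤ rα/K`. -/
theorem typeI_error_S_MAP_threshold {Ω : Type*} {F : MeasurableSpace Ω}
    {μ : Measure Ω} [IsProbabilityMeasure μ]
    (𝓕 : Filtration ℕ F)
    {t : Ω → ℕ} (ht : Measurable t) (ht1 : ∀ ω, 1 ≤ t ω)
    (π : ℕ → Ω → ℝ)
    (hπmeas : ∀ n, StronglyMeasurable[𝓕 n] (π n))
    (hπ : ∀ n, π n =ᵐ[μ] μ[Set.indicator {ω | t ω ≤ n} (fun _ => (1 : ℝ)) | 𝓕 n])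
    {α : ℝ} (hα : α ∈ Set.Ioo (0 : ℝ) 1)
    {K : ℕ} (hK : 1 ≤ K) {r : ℕ} (hr1 : 1 ≤ r) (hrK : r ≤ K)
    (T : Ω → ℕ∞)
    (hTdef : ∀ ω, T ω =
      sInf {m : ℕ∞ | ∃ n : ℕ, m = (n : ℕ∞) ∧ 1 - (r : ℝ) * α / (K : ℝ) ≤ π n ω}) :
    μ {ω | T ω < ⊤ ∧ T ω < (t ω : ℕ∞)} ≤ ENNReal.ofReal ((r : ℝ) * α / (K : ℝ)) := by
  set c : ℝ := (r : ℝ) * α / (K : ℝ) with hc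
  set Q : ℝ := 1 - c with hQ
  have hK0 : (0 : ℝ) < K := by exact_mod_cast Nat.lt_of_lt_of_le Nat.zero_lt_one hK
  have hc0 : 0 < c := by
    apply div_pos _ hK0
    exact mul_pos (by exact_mod_cast Nat.lt_of_lt_of_le Nat.zero_lt_one hr1) hα.1
  -- the events A n = {T = n}
  set A : ℕ → Set Ω := fun n => {ω | Q ≤ π n ω ∧ ∀ m < n, π m ω < Q} with hA
  have hAmeas : ∀ n, MeasurableSet[𝓕 n] (A n) := by
    intro n
    have h1 : MeasurableSet[𝓕 n] {ω | Q ≤ π n ω} :=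
      measurableSet_le measurable_const (hπmeas n).measurable
    have h2 : ∀ m, m < n → MeasurableSet[𝓕 n] {ω | π m ω < Q} := fun m hm =>
      measurableSet_lt (((hπmeas m).measurable).mono (𝓕.mono hm.le) le_rfl) measurable_const
    have : A n = {ω | Q ≤ π n ω} ∩ ⋂ m, ⋂ (_ : m < n), {ω | π m ω < Q} := by
      ext ω; simp [hA, Set.mem_iInter]
    rw [this]
    exact h1.inter (MeasurableSet.iInter fun m => MeasurableSet.iInter fun hm => h2 m hm)
  have hAmeas' : ∀ n, MeasurableSet (A n) := fun n => 𝓕.le n _ (hAmeas n)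
  -- characterization of T on the event {T < ⊤}
  have hTchar : ∀ ω n, ω ∈ A n → T ω = (n : ℕ∞) := by
    intro ω n hω
    rw [hTdef ω]
    apply le_antisymm
    · exact sInf_le ⟨n, rfl, hω.1⟩
    · refine le_sInf ?_
      rintro m ⟨k, rfl, hk⟩
      by_contra h
      push_neg at h
      have hkn : k < n := by exact_mod_cast h
      exact absurd hk (not_le.mpr (hω.2 k hkn))
  have hsubset : {ω | T ω < ⊤ ∧ T ω < (t ω : ℕ∞)} ⊆
      ⋃ n, A n ∩ {ω | n < t ω} := by
    rintro ω ⟨hT1, hT2⟩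
    set N : Set ℕ := {n : ℕ | Q ≤ π n ω} with hN
    have hNne : N.Nonempty := by
      by_contra hne
      rw [Set.not_nonempty_iff_eq_empty] at hne
      have : {m : ℕ∞ | ∃ n : ℕ, m = (n : ℕ∞) ∧ Q ≤ π n ω} = ∅ := by
        ext m; simp only [Set.mem_setOf_eq, Set.mem_empty_iff_false, iff_false]
        rintro ⟨n, rfl, hn⟩
        have hnN : n ∈ N := hn
        rw [hne] at hnN
        exact hnN
      rw [hTdef ω, this, sInf_empty] at hT1
      exact absurd hT1 (lt_irrefl _)
    set n₀ : ℕ := sInf N with hn₀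
    have hmemA : ω ∈ A n₀ := by
      refine ⟨Nat.sInf_mem hNne, fun m hm => ?_⟩
      have := Nat.notMem_of_lt_sInf (hn₀ ▸ hm : m < sInf N)
      simpa [hN] using this
    have hTn : T ω = (n₀ : ℕ∞) := hTchar ω n₀ hmemA
    refine Set.mem_iUnion.mpr ⟨n₀, hmemA, ?_⟩
    rw [hTn] at hT2
    exact_mod_cast hT2
  -- key per-n estimate
  have hkey : ∀ n, μ (A n ∩ {ω | n < t ω}) ≤ ENNReal.ofReal c * μ (A n) := by
    intro n
    have hmle := 𝓕.le n
    haveI : SigmaFinite (μ.trim hmle) := by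
      have : IsFiniteMeasure (μ.trim hmle) := isFiniteMeasure_trim hmle
      infer_instance
    have htn : MeasurableSet {ω | t ω ≤ n} := ht measurableSet_Iic
    have hind : Integrable (Set.indicator {ω | t ω ≤ n} (fun _ => (1 : ℝ))) μ :=
      (integrable_const (1 : ℝ)).indicator htn
    have hπint : Integrable (π n) μ := integrable_condExp.congr (hπ n).symm
    -- ∫ over A n of π n equals μ(A n ∩ {t ≤ n}).toReal
    have hint_eq : ∫ ω in A n, π n ω ∂μ = (μ (A n ∩ {ω | t ω ≤ n})).toReal := by
      have h1 : ∫ ω in A n, π n ω ∂μ =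
          ∫ ω in A n, (μ[Set.indicator {ω | t ω ≤ n} (fun _ => (1 : ℝ)) | 𝓕 n]) ω ∂μ :=
        setIntegral_congr_ae (hAmeas' n) ((hπ n).mono fun ω h _ => h)
      rw [h1, setIntegral_condExp hmle hind (hAmeas n),
        setIntegral_indicator htn]
      simp [Measure.restrict_apply (hAmeas' n), measureReal_def]
    -- lower bound via Q ≤ π n on A n
    have hlow : Q * (μ (A n)).toReal ≤ (μ (A n ∩ {ω | t ω ≤ n})).toReal := by
      rw [← hint_eq]
      exact setIntegral_ge_of_const_le_real (hAmeas' n) (measure_ne_top μ _)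
        (fun ω hω => hω.1) hπint.integrableOn
    -- split μ (A n)
    have hsplit : μ (A n) = μ (A n ∩ {ω | t ω ≤ n}) + μ (A n ∩ {ω | n < t ω}) := by
      have : A n ∩ {ω | n < t ω} = A n \ {ω | t ω ≤ n} := by
        ext ω; simp [Set.mem_diff, not_le]
      rw [this, measure_inter_add_diff (A n) htn]
    have hfin1 : μ (A n ∩ {ω | t ω ≤ n}) ≠ ⊤ := measure_ne_top μ _
    have hfin2 : μ (A n ∩ {ω | n < t ω}) ≠ ⊤ := measure_ne_top μ _
    have hfin : μ (A n) ≠ ⊤ := measure_ne_top μ _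
    have htr : (μ (A n ∩ {ω | n < t ω})).toReal ≤ c * (μ (A n)).toReal := by
      have h1 : (μ (A n)).toReal =
          (μ (A n ∩ {ω | t ω ≤ n})).toReal + (μ (A n ∩ {ω | n < t ω})).toReal := by
        rw [hsplit, ENNReal.toReal_add hfin1 hfin2]
      rw [hQ] at hlow
      linarith [hlow, h1]
    calc μ (A n ∩ {ω | n < t ω}) = ENNReal.ofReal ((μ (A n ∩ {ω | n < t ω})).toReal) :=
          (ENNReal.ofReal_toReal hfin2).symm
      _ ≤ ENNReal.ofReal (c * (μ (A n)).toReal) := ENNReal.ofReal_le_ofReal htr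
      _ = ENNReal.ofReal c * μ (A n) := by
          rw [ENNReal.ofReal_mul hc0.le, ENNReal.ofReal_toReal hfin]
  -- disjointness of the A n
  have hdisj : Pairwise (Function.onFun Disjoint A) := by
    intro n m hnm
    rcases lt_or_gt_of_ne hnm with h | h
    · exact Set.disjoint_left.mpr fun ω hn hm => absurd hn.1 (not_le.mpr (hm.2 n h))
    · exact Set.disjoint_left.mpr fun ω hn hm => absurd hm.1 (not_le.mpr (hn.2 m h))
  -- put it together
  calc μ {ω | T ω < ⊤ ∧ T ω < (t ω : ℕ∞)}
      ≤ μ (⋃ n, A n ∩ {ω | n < t ω}) := measure_mono hsubset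
    _ ≤ ∑' n, μ (A n ∩ {ω | n < t ω}) := measure_iUnion_le _
    _ ≤ ∑' n, ENNReal.ofReal c * μ (A n) := ENNReal.tsum_le_tsum hkey
    _ = ENNReal.ofReal c * ∑' n, μ (A n) := ENNReal.tsum_mul_left
    _ = ENNReal.ofReal c * μ (⋃ n, A n) := by rw [measure_iUnion hdisj hAmeas']
    _ ≤ ENNReal.ofReal c * 1 := by
        exact mul_le_mul_right (prob_le_one) _
    _ = ENNReal.ofReal c := mul_one _
end

section
/- Let V : ℕ → ℕ satisfy V(0) = 0 and 1 ≤ V(n) − V(n−1) ≤ B for every n ≥ 1, where B ≥ 1 is an integer. Let t, T, γ, Γ be integers with t ≥ 1, γ ≥ 1, Γ ≥ 1, such that V(γ−1) < t ≤ V(γ) and T ≤ V(Γ). Then, as real numbers, T − t ≤ (V(Γ)/Γ)·(Γ − γ) + γ·(B − 1) + (B − 1). -/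
/-- deterministic delay-decomposition inequality. If the observation times
`V(n)` have inter-observation intervals between `1` and `B`, `V(γ−1) < t ≤ V(γ)`, and
`T ≤ V(Γ)`, then `T − t ≤ (V(Γ)/Γ)(Γ − γ) + γ(B − 1) + (B − 1)`. -/
theorem delay_decomposition (V : ℕ → ℕ) (hV0 : V 0 = 0)
    {B : ℕ} (hB : 1 ≤ B)
    (hstep : ∀ n : ℕ, 1 ≤ n → V (n - 1) + 1 ≤ V n ∧ V n ≤ V (n - 1) + B)
    (T : ℤ) (t γ Γ : ℕ) (ht : 1 ≤ t) (hγ : 1 ≤ γ) (hΓ : 1 ≤ Γ)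
    (h1 : V (γ - 1) < t) (h2 : t ≤ V γ) (h3 : T ≤ (V Γ : ℤ)) :
    (T : ℝ) - (t : ℝ) ≤
      ((V Γ : ℝ) / (Γ : ℝ)) * ((Γ : ℝ) - (γ : ℝ)) + (γ : ℝ) * ((B : ℝ) - 1) + ((B : ℝ) - 1) := by
  have hlow : ∀ n, n ≤ V n := by
    intro n
    induction n with
    | zero => simp [hV0]
    | succ k ih =>
      have h := (hstep (k + 1) (by omega)).1
      simp only [Nat.add_sub_cancel] at h
      omega
  have hhigh : ∀ n, V n ≤ n * B := by
    intro n
    induction n with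
    | zero => simp [hV0]
    | succ k ih =>
      have h := (hstep (k + 1) (by omega)).2
      simp only [Nat.add_sub_cancel] at h
      have : (k + 1) * B = k * B + B := by ring
      omega
  -- t ≥ γ
  have htγ : γ ≤ t := by
    have := hlow (γ - 1)
    omega
  have hΓpos : (0 : ℝ) < (Γ : ℝ) := by exact_mod_cast hΓ
  set x : ℝ := (V Γ : ℝ) / (Γ : ℝ) with hx
  have hxΓ : x * (Γ : ℝ) = (V Γ : ℝ) := by
    rw [hx]
    field_simp [hx]
  have hxB : x ≤ (B : ℝ) := by
    rw [hx, div_le_iff₀ hΓpos]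
    have := hhigh Γ
    push_cast
    nlinarith [hhigh Γ, (by exact_mod_cast hhigh Γ : (V Γ : ℝ) ≤ (Γ : ℝ) * (B : ℝ))]
  have hxγ : x * (γ : ℝ) ≤ (B : ℝ) * (γ : ℝ) :=
    mul_le_mul_of_nonneg_right hxB (by positivity)
  have hT : (T : ℝ) ≤ (V Γ : ℝ) := by exact_mod_cast h3
  have htγ' : (γ : ℝ) ≤ (t : ℝ) := by exact_mod_cast htγ
  have hB' : (1 : ℝ) ≤ (B : ℝ) := by exact_mod_cast hB
  have hexp : x * ((Γ : ℝ) - (γ : ℝ)) = (V Γ : ℝ) - x * (γ : ℝ) := by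
    rw [mul_sub, hxΓ]
  rw [hexp]
  linarith
end
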